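/- Let μ < 0 and k ∈ T^d. Then the function z ↦ Δ_μ(k;z) = 1 + μ ∫_{T^d} (𝓔_k(q) − z)^{-1} dη(q) is strictly decreasing on (−∞, E_min(k)), and Δ_μ(k;z) → 1 as z → −∞. Moreover, if d ∈ {1,2} and k has at least one coordinate different from π, then Δ_μ(k;z) → −∞ as z ↑ E_min(k). -/

import Mathlib

open MeasureTheory Real Filter

noncomputable section

instance fact_two_pi_pos : Fact (0 < 2 * Real.pi) := ⟨by positivity⟩

/-- The `d`-dimensional torus `(ℝ/2πℤ)^d`. -/
abbrev Torus (d : ℕ) : Type := Fin d → AddCircle (2 * Real.pi)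

/-- Cosine as a function on the circle `ℝ/2πℤ`. -/
noncomputable def torusCos : AddCircle (2 * Real.pi) → ℝ := Real.cos_periodic.lift

/-- The one-particle dispersion `ε(p) = 2∑ᵢ (1 − cos pⁱ)` on the torus. -/
noncomputable def eps (d : ℕ) (p : Torus d) : ℝ := 2 * ∑ i, (1 - torusCos (p i))

/-- The normalized Haar measure `η` on the torus `T^d`. -/
noncomputable def η (d : ℕ) : Measure (Torus d) :=
  Measure.pi fun _ => (AddCircle.haarAddCircle : Measure (AddCircle (2 * Real.pi)))

instance (d : ℕ) : IsProbabilityMeasure (η d) := by unfold η; infer_instance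

/-- The two-particle fiber dispersion `𝓔ₖ(p) = ε(k−p) + ε(p)`. -/
noncomputable def calE (d : ℕ) (k p : Torus d) : ℝ := eps d (k - p) + eps d p

/-- `E_min(k) = min_{p ∈ T^d} 𝓔ₖ(p)`. -/
noncomputable def Emin (d : ℕ) (k : Torus d) : ℝ := sInf (Set.range (calE d k))

/-- `E_max(k) = max_{p ∈ T^d} 𝓔ₖ(p)`. -/
noncomputable def Emax (d : ℕ) (k : Torus d) : ℝ := sSup (Set.range (calE d k))

/-- The three-particle dispersion `E(K;p,q) = ε(K−p−q) + ε(p) + ε(q)`. -/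
noncomputable def EE (d : ℕ) (K p q : Torus d) : ℝ := eps d (K - p - q) + eps d p + eps d q

/-- `E_min(K) = min_{p,q ∈ T^d} E(K;p,q)`. -/
noncomputable def E3min (d : ℕ) (K : Torus d) : ℝ :=
  sInf (Set.range fun pq : Torus d × Torus d => EE d K pq.1 pq.2)

/-- `E_max(K) = max_{p,q ∈ T^d} E(K;p,q)`. -/
noncomputable def E3max (d : ℕ) (K : Torus d) : ℝ :=
  sSup (Set.range fun pq : Torus d × Torus d => EE d K pq.1 pq.2)

/-- The two-particle determinant `Δ_μ(k;z) = 1 + μ ∫ (𝓔ₖ(q) − z)⁻¹ dη(q)`. -/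
noncomputable def Delta2 (d : ℕ) (μ : ℝ) (k : Torus d) (z : ℝ) : ℝ :=
  1 + μ * ∫ q, (calE d k q - z)⁻¹ ∂(η d)

/-- The channel determinant `Δ_μ(K,p;z) = 1 + μ ∫ (E(K;p,q) − z)⁻¹ dη(q)`. -/
noncomputable def Delta3 (d : ℕ) (μ : ℝ) (K p : Torus d) (z : ℝ) : ℝ :=
  1 + μ * ∫ q, (EE d K p q - z)⁻¹ ∂(η d)

/-- The point `π ∈ ℝ/2πℤ`. -/
noncomputable def piPt : AddCircle (2 * Real.pi) := ((Real.pi : ℝ) : AddCircle (2 * Real.pi))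

open scoped ENNReal

-- AUX
lemma torusCos_coe (x : ℝ) : torusCos (x : AddCircle (2 * Real.pi)) = Real.cos x :=
  Real.cos_periodic.lift_coe x

lemma continuous_torusCos : Continuous torusCos :=
  Continuous.quotient_liftOn' Real.continuous_cos _

lemma torusCos_le_one (y : AddCircle (2 * Real.pi)) : torusCos y ≤ 1 := by
  obtain ⟨x, rfl⟩ := QuotientAddGroup.mk_surjective y
  rw [torusCos_coe]; exact Real.cos_le_one x

lemma exists_lift_norm (y : AddCircle (2 * Real.pi)) :
    ∃ x : ℝ, (x : AddCircle (2 * Real.pi)) = y ∧ |x| = ‖y‖ := by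
  obtain ⟨x, rfl⟩ := QuotientAddGroup.mk_surjective y
  refine ⟨x - round ((2 * Real.pi)⁻¹ * x) * (2 * Real.pi), ?_, ?_⟩
  · rw [AddCircle.coe_sub, sub_eq_self, AddCircle.coe_eq_zero_iff]
    exact ⟨round ((2 * Real.pi)⁻¹ * x), by rw [zsmul_eq_mul]⟩
  · rw [AddCircle.norm_eq]

lemma continuous_calE (d : ℕ) (k : Torus d) : Continuous (calE d k) := by
  unfold calE eps
  refine Continuous.add ?_ ?_ <;>
  · refine continuous_const.mul (continuous_finset_sum _ fun i _ => ?_)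
    refine continuous_const.sub (continuous_torusCos.comp ?_)
    first
      | exact (continuous_apply i).comp (continuous_const.sub continuous_id)
      | exact continuous_apply i

lemma calE_nonneg (d : ℕ) (k q : Torus d) : 0 ≤ calE d k q := by
  unfold calE eps
  have : ∀ p : Torus d, 0 ≤ 2 * ∑ i, (1 - torusCos (p i)) := fun p => by
    have h := Finset.sum_nonneg (fun i (_ : i ∈ Finset.univ) => by
      linarith [torusCos_le_one (p i)] : ∀ i ∈ Finset.univ, (0:ℝ) ≤ 1 - torusCos (p i))
    linarith
  linarith [this (k - q), this q]

lemma Emin_le (d : ℕ) (k q : Torus d) : Emin d k ≤ calE d k q :=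
  csInf_le ⟨0, fun y ⟨p, hp⟩ => hp ▸ calE_nonneg d k p⟩ ⟨q, rfl⟩

lemma Emin_nonneg (d : ℕ) (k : Torus d) : 0 ≤ Emin d k :=
  le_csInf ⟨calE d k 0, ⟨0, rfl⟩⟩ fun y ⟨p, hp⟩ => hp ▸ calE_nonneg d k p

lemma integrable_inv (d : ℕ) (k : Torus d) {z : ℝ} (hz : z < Emin d k) :
    Integrable (fun q => (calE d k q - z)⁻¹) (η d) := by
  have hpos : ∀ q, 0 < calE d k q - z := fun q => sub_pos.2 (hz.trans_le (Emin_le d k q))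
  have hcont : Continuous fun q : Torus d => (calE d k q - z)⁻¹ :=
    ((continuous_calE d k).sub continuous_const).inv₀ fun q => (hpos q).ne'
  exact hcont.integrable_of_hasCompactSupport
    (isCompact_univ.of_isClosed_subset (isClosed_tsupport _) (Set.subset_univ _))

lemma one_sub_torusCos_le (y : AddCircle (2 * Real.pi)) :
    1 - torusCos y ≤ ‖y‖ ^ 2 / 2 := by
  obtain ⟨x, rfl, hx⟩ := exists_lift_norm y
  rw [torusCos_coe, ← hx, sq_abs]
  linarith [Real.one_sub_sq_div_two_le_cos (x := x)]

/-- Key structural bound: there is a point `b` (the minimiser) such that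
`calE (b + y) - Emin ≤ 2 ∑ ‖y i‖²`. -/
lemma exists_min_quadratic_bound (d : ℕ) (k : Torus d) :
    ∃ b : Torus d, ∀ y : Torus d,
      calE d k (b + y) - Emin d k ≤ 2 * ∑ i, ‖y i‖ ^ 2 := by
  -- lifts of the components of k
  have hκ : ∀ i, ∃ x : ℝ, (x : AddCircle (2 * Real.pi)) = k i :=
    fun i => QuotientAddGroup.mk_surjective (k i)
  choose κ hκ using hκ
  set c : Fin d → ℝ := fun i => |Real.cos (κ i / 2)| with hc
  set β : Fin d → ℝ := fun i =>
    if 0 ≤ Real.cos (κ i / 2) then κ i / 2 else κ i / 2 + Real.pi with hβ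
  set b : Torus d := fun i => ((β i : ℝ) : AddCircle (2 * Real.pi)) with hb
  set hf : Fin d → AddCircle (2 * Real.pi) → ℝ :=
    fun i y => 2 * (1 - torusCos (k i - y)) + 2 * (1 - torusCos y) with hhf
  have H1 : ∀ q : Torus d, calE d k q = ∑ i, hf i (q i) := by
    intro q
    unfold calE eps
    rw [Finset.mul_sum, Finset.mul_sum, ← Finset.sum_add_distrib]
    exact Finset.sum_congr rfl fun i _ => by simp [hhf, Pi.sub_apply, mul_sub]
  have H2 : ∀ (i : Fin d) (x : ℝ),
      hf i ((β i + x : ℝ) : AddCircle (2 * Real.pi)) = 4 - 4 * c i * Real.cos x := by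
    intro i x
    have hsub : k i - ((β i + x : ℝ) : AddCircle (2 * Real.pi))
        = ((κ i - (β i + x) : ℝ) : AddCircle (2 * Real.pi)) := by
      rw [AddCircle.coe_sub, hκ i]
    simp only [hhf, hsub, torusCos_coe]
    by_cases hpos : 0 ≤ Real.cos (κ i / 2)
    · have hβi : β i = κ i / 2 := by simp [hβ, hpos]
      have hci : c i = Real.cos (κ i / 2) := abs_of_nonneg hpos
      rw [hβi, hci]
      have e1 : κ i - (κ i / 2 + x) = κ i / 2 - x := by ring
      rw [e1, Real.cos_sub, Real.cos_add]
      ring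
    · have hβi : β i = κ i / 2 + Real.pi := by simp [hβ, hpos]
      have hci : c i = -Real.cos (κ i / 2) := abs_of_neg (not_le.1 hpos)
      rw [hβi, hci]
      have e1 : κ i - (κ i / 2 + Real.pi + x) = κ i / 2 - x - Real.pi := by ring
      rw [e1, show κ i / 2 + Real.pi + x = κ i / 2 + x + Real.pi by ring,
        Real.cos_sub_pi, Real.cos_add_pi, Real.cos_sub, Real.cos_add]
      ring
  have H3 : ∀ (i : Fin d) (y : AddCircle (2 * Real.pi)), 4 - 4 * c i ≤ hf i y := by
    intro i y
    obtain ⟨x₀, rfl⟩ := QuotientAddGroup.mk_surjective y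
    have : ((x₀ : ℝ) : AddCircle (2 * Real.pi)) = ((β i + (x₀ - β i) : ℝ) : _) := by
      norm_num
    rw [this, H2 i (x₀ - β i)]
    have h1 : Real.cos (x₀ - β i) ≤ 1 := Real.cos_le_one _
    have h2 : 0 ≤ c i := abs_nonneg _
    nlinarith
  have H4 : Emin d k = ∑ i, (4 - 4 * c i) := by
    refine le_antisymm ?_ ?_
    · have : calE d k b = ∑ i, (4 - 4 * c i) := by
        rw [H1]
        refine Finset.sum_congr rfl fun i _ => ?_
        have : b i = ((β i + 0 : ℝ) : AddCircle (2 * Real.pi)) := by simp [hb]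
        rw [this, H2 i 0, Real.cos_zero]; ring
      exact this ▸ csInf_le ⟨0, fun y ⟨p, hp⟩ => hp ▸ calE_nonneg d k p⟩ ⟨b, rfl⟩
    · refine le_csInf ⟨calE d k 0, ⟨0, rfl⟩⟩ fun y ⟨q, hq⟩ => ?_
      rw [← hq, H1]
      exact Finset.sum_le_sum fun i _ => H3 i (q i)
  refine ⟨b, fun y => ?_⟩
  have H5 : ∀ i : Fin d, hf i (b i + y i) ≤ (4 - 4 * c i) + 2 * ‖y i‖ ^ 2 := by
    intro i
    obtain ⟨t, ht, htn⟩ := exists_lift_norm (y i)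
    have : b i + y i = ((β i + t : ℝ) : AddCircle (2 * Real.pi)) := by
      rw [AddCircle.coe_add, hb, ht]
    rw [this, H2 i t]
    have h1 : 1 - Real.cos t ≤ t ^ 2 / 2 := by
      linarith [Real.one_sub_sq_div_two_le_cos (x := t)]
    have h2 : Real.cos t ≤ 1 := Real.cos_le_one t
    have h3 : 0 ≤ c i := abs_nonneg _
    have h4 : c i ≤ 1 := abs_cos_le_one _
    have h5 : t ^ 2 = ‖y i‖ ^ 2 := by rw [← htn, sq_abs]
    nlinarith
  calc calE d k (b + y) - Emin d k
      = ∑ i, hf i (b i + y i) - ∑ i, (4 - 4 * c i) := by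
        rw [H1, H4]; rfl
    _ ≤ ∑ i, ((4 - 4 * c i) + 2 * ‖y i‖ ^ 2) - ∑ i, (4 - 4 * c i) := by
        gcongr with i _
        exact H5 i
    _ = 2 * ∑ i, ‖y i‖ ^ 2 := by
        rw [Finset.sum_add_distrib, Finset.mul_sum]
        simp [two_mul]

lemma lintegral_Ioc_inv_mul_top {c : ℝ} (hc : 0 < c) :
    ∫⁻ x in Set.Ioc (0:ℝ) 1, (ENNReal.ofReal (c * x))⁻¹ = ⊤ := by
  by_contra hfin
  have hne : ∫⁻ x in Set.Ioc (0:ℝ) 1, (ENNReal.ofReal (c * x))⁻¹ < ⊤ :=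
    lt_top_iff_ne_top.2 hfin
  -- then (c*x)⁻¹ would be integrable on Ioc 0 1, hence so would x⁻¹
  have hmeas : Measurable fun x : ℝ => (c * x)⁻¹ :=
    (measurable_const.mul measurable_id).inv
  have hInt : IntegrableOn (fun x : ℝ => (c * x)⁻¹) (Set.Ioc (0:ℝ) 1) := by
    refine ⟨hmeas.aestronglyMeasurable, ?_⟩
    rw [hasFiniteIntegral_iff_norm]
    have : ∀ᵐ x ∂(volume.restrict (Set.Ioc (0:ℝ) 1)),
        ENNReal.ofReal ‖(c * x)⁻¹‖ = (ENNReal.ofReal (c * x))⁻¹ := by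
      filter_upwards [ae_restrict_mem measurableSet_Ioc] with x hx
      have hcx : 0 < c * x := mul_pos hc hx.1
      rw [Real.norm_eq_abs, abs_of_nonneg (inv_nonneg.2 hcx.le),
        ENNReal.ofReal_inv_of_pos hcx]
    rwa [lintegral_congr_ae this]
  have hInt' : IntegrableOn (fun x : ℝ => x⁻¹) (Set.Ioc (0:ℝ) 1) := by
    have h2 : IntegrableOn (fun x : ℝ => c * (c * x)⁻¹) (Set.Ioc (0:ℝ) 1) :=
      hInt.const_mul c
    refine h2.congr_fun (fun x hx => ?_) measurableSet_Ioc
    have hx0 : x ≠ 0 := ne_of_gt hx.1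
    field_simp
  have : IntervalIntegrable (fun x : ℝ => x⁻¹) volume 0 1 := by
    rwa [intervalIntegrable_iff_integrableOn_Ioc_of_le zero_le_one]
  rw [intervalIntegrable_inv_iff] at this
  rcases this with h | h
  · norm_num at h
  · exact h (by norm_num [Set.uIcc_of_le])

lemma haar_lintegral (f : AddCircle (2 * Real.pi) → ℝ≥0∞) :
    ∫⁻ y, f y ∂(AddCircle.haarAddCircle : Measure (AddCircle (2 * Real.pi)))
      = (ENNReal.ofReal (2 * Real.pi))⁻¹
        * ∫⁻ x in Set.Ioc (-Real.pi) (-Real.pi + 2 * Real.pi), f x := by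
  rw [AddCircle.lintegral_preimage (2 * Real.pi) (-Real.pi) f,
    AddCircle.volume_eq_smul_haarAddCircle, lintegral_smul_measure, smul_eq_mul, ← mul_assoc,
    ENNReal.inv_mul_cancel (by positivity) ENNReal.ofReal_ne_top, one_mul]

lemma norm_coe_le (x : ℝ) : ‖(x : AddCircle (2 * Real.pi))‖ ≤ |x| :=
  by rw [← Real.norm_eq_abs]; exact QuotientAddGroup.norm_mk_le_norm

lemma circle_top :
    ∫⁻ y : AddCircle (2 * Real.pi), (ENNReal.ofReal (2 * ‖y‖ ^ 2))⁻¹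
      ∂(AddCircle.haarAddCircle) = ⊤ := by
  rw [haar_lintegral]
  rw [ENNReal.mul_eq_top]
  left
  constructor
  · simp [ENNReal.inv_ne_zero, ENNReal.mul_eq_top]
  · rw [eq_top_iff]
    calc (⊤ : ℝ≥0∞) = ∫⁻ x in Set.Ioc (0:ℝ) 1, (ENNReal.ofReal (2 * x))⁻¹ :=
          (lintegral_Ioc_inv_mul_top two_pos).symm
      _ ≤ ∫⁻ x in Set.Ioc (0:ℝ) 1,
            (ENNReal.ofReal (2 * ‖(x : AddCircle (2*Real.pi))‖ ^ 2))⁻¹ := by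
          refine setLIntegral_mono' measurableSet_Ioc fun x hx => ?_
          refine ENNReal.inv_le_inv.2 (ENNReal.ofReal_le_ofReal ?_)
          have h1 : ‖(x : AddCircle (2*Real.pi))‖ ≤ |x| := norm_coe_le x
          have h2 : |x| = x := abs_of_pos hx.1
          nlinarith [norm_nonneg (x : AddCircle (2*Real.pi)), hx.1, hx.2]
      _ ≤ ∫⁻ x in Set.Ioc (-Real.pi) (-Real.pi + 2*Real.pi),
            (ENNReal.ofReal (2 * ‖(x : AddCircle (2*Real.pi))‖ ^ 2))⁻¹ := by
          refine lintegral_mono_set ?_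
          have hπ : 1 ≤ Real.pi := by linarith [Real.pi_gt_three]
          intro x hx
          constructor <;> [linarith [hx.1, Real.pi_pos]; linarith [hx.2]]

lemma circle2_inner {u : ℝ} (hu : u ∈ Set.Ioc (0:ℝ) 1) :
    (ENNReal.ofReal (2 * Real.pi))⁻¹ * (ENNReal.ofReal (4 * u))⁻¹
      ≤ ∫⁻ b : AddCircle (2 * Real.pi),
          (ENNReal.ofReal (2 * (‖((u:ℝ) : AddCircle (2*Real.pi))‖ ^ 2 + ‖b‖ ^ 2)))⁻¹
          ∂(AddCircle.haarAddCircle) := by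
  rw [haar_lintegral]
  refine mul_le_mul_right ?_ _
  have hπ : 1 ≤ Real.pi := by linarith [Real.pi_gt_three]
  calc (ENNReal.ofReal (4 * u))⁻¹
      = (ENNReal.ofReal (4 * u ^ 2))⁻¹ * ENNReal.ofReal u := by
        have h4u : (0:ℝ) ≤ 4 * u := by nlinarith [hu.1]
        have : ENNReal.ofReal (4 * u ^ 2) = ENNReal.ofReal (4 * u) * ENNReal.ofReal u := by
          rw [← ENNReal.ofReal_mul h4u]; ring_nf
        rw [this, ENNReal.mul_inv (Or.inr ENNReal.ofReal_ne_top)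
          (Or.inr (by simp [hu.1]))]
        rw [mul_assoc, ENNReal.inv_mul_cancel (by simp [hu.1]) ENNReal.ofReal_ne_top,
          mul_one]
    _ = ∫⁻ _x in Set.Ioc (0:ℝ) u, (ENNReal.ofReal (4 * u ^ 2))⁻¹ := by
        rw [setLIntegral_const, Real.volume_Ioc, sub_zero]
    _ ≤ ∫⁻ x in Set.Ioc (0:ℝ) u,
          (ENNReal.ofReal (2 * (‖((u:ℝ) : AddCircle (2*Real.pi))‖ ^ 2
            + ‖((x:ℝ) : AddCircle (2*Real.pi))‖ ^ 2)))⁻¹ := by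
        refine setLIntegral_mono' measurableSet_Ioc fun x hx => ?_
        refine ENNReal.inv_le_inv.2 (ENNReal.ofReal_le_ofReal ?_)
        have h1 := norm_coe_le u
        have h2 := norm_coe_le x
        have h3 : |u| = u := abs_of_pos hu.1
        have h4 : |x| = x := abs_of_pos hx.1
        nlinarith [norm_nonneg ((u:ℝ) : AddCircle (2*Real.pi)),
          norm_nonneg ((x:ℝ) : AddCircle (2*Real.pi)), hx.2, hu.1, hx.1]
    _ ≤ ∫⁻ x in Set.Ioc (-Real.pi) (-Real.pi + 2*Real.pi),
          (ENNReal.ofReal (2 * (‖((u:ℝ) : AddCircle (2*Real.pi))‖ ^ 2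
            + ‖((x:ℝ) : AddCircle (2*Real.pi))‖ ^ 2)))⁻¹ := by
        refine lintegral_mono_set fun x hx => ?_
        constructor
        · linarith [hx.1, Real.pi_pos]
        · linarith [hx.2, hu.2]

lemma circle2_top :
    ∫⁻ a : AddCircle (2 * Real.pi), ∫⁻ b : AddCircle (2 * Real.pi),
        (ENNReal.ofReal (2 * (‖a‖ ^ 2 + ‖b‖ ^ 2)))⁻¹
        ∂(AddCircle.haarAddCircle) ∂(AddCircle.haarAddCircle) = ⊤ := by
  rw [haar_lintegral]
  rw [ENNReal.mul_eq_top]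
  left
  refine ⟨by simp [ENNReal.inv_ne_zero, ENNReal.mul_eq_top], eq_top_iff.2 ?_⟩
  have hπ : 1 ≤ Real.pi := by linarith [Real.pi_gt_three]
  calc (⊤ : ℝ≥0∞)
      = (ENNReal.ofReal (2 * Real.pi))⁻¹
          * ∫⁻ u in Set.Ioc (0:ℝ) 1, (ENNReal.ofReal (4 * u))⁻¹ := by
        rw [lintegral_Ioc_inv_mul_top (by norm_num : (0:ℝ) < 4)]
        rw [ENNReal.mul_top (by simp [ENNReal.inv_ne_zero, ENNReal.mul_eq_top])]
    _ = ∫⁻ u in Set.Ioc (0:ℝ) 1,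
          (ENNReal.ofReal (2 * Real.pi))⁻¹ * (ENNReal.ofReal (4 * u))⁻¹ := by
        rw [lintegral_const_mul' _ _ (by simp [Real.pi_pos, Real.pi_pos.le] :
          (ENNReal.ofReal (2 * Real.pi))⁻¹ ≠ ⊤)]
    _ ≤ ∫⁻ u in Set.Ioc (0:ℝ) 1, ∫⁻ b : AddCircle (2 * Real.pi),
          (ENNReal.ofReal (2 * (‖((u:ℝ) : AddCircle (2*Real.pi))‖ ^ 2 + ‖b‖ ^ 2)))⁻¹
          ∂(AddCircle.haarAddCircle) := by
        refine setLIntegral_mono' measurableSet_Ioc fun u hu => circle2_inner hu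
    _ ≤ ∫⁻ u in Set.Ioc (-Real.pi) (-Real.pi + 2*Real.pi),
          ∫⁻ b : AddCircle (2 * Real.pi),
          (ENNReal.ofReal (2 * (‖((u:ℝ) : AddCircle (2*Real.pi))‖ ^ 2 + ‖b‖ ^ 2)))⁻¹
          ∂(AddCircle.haarAddCircle) := by
        refine lintegral_mono_set fun x hx => ?_
        exact ⟨by linarith [hx.1, Real.pi_pos], by linarith [hx.2]⟩

lemma torus_quad_top (d : ℕ) (hd : d = 1 ∨ d = 2) :
    ∫⁻ y : Torus d, (ENNReal.ofReal (2 * ∑ i, ‖y i‖ ^ 2))⁻¹ ∂(η d) = ⊤ := by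
  rcases hd with rfl | rfl
  · have hmp := measurePreserving_funUnique
      (AddCircle.haarAddCircle : Measure (AddCircle (2 * Real.pi))) (Fin 1)
    have := hmp.lintegral_comp_emb
      (MeasurableEquiv.funUnique (Fin 1) (AddCircle (2 * Real.pi))).measurableEmbedding
      (fun t : AddCircle (2 * Real.pi) => (ENNReal.ofReal (2 * ‖t‖ ^ 2))⁻¹)
    rw [show η 1 = Measure.pi fun _ => AddCircle.haarAddCircle from rfl]
    rw [show (fun y : Torus 1 => (ENNReal.ofReal (2 * ∑ i, ‖y i‖ ^ 2))⁻¹)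
        = fun y : Torus 1 => (ENNReal.ofReal
            (2 * ‖(MeasurableEquiv.funUnique (Fin 1) (AddCircle (2 * Real.pi))) y‖ ^ 2))⁻¹
      from funext fun y => by simp [Fin.sum_univ_one, MeasurableEquiv.funUnique]]
    exact this.trans circle_top
  · have hmp := measurePreserving_piFinTwo
      (fun _ : Fin 2 => (AddCircle.haarAddCircle : Measure (AddCircle (2 * Real.pi))))
    have := hmp.lintegral_comp_emb
      (MeasurableEquiv.piFinTwo fun _ => AddCircle (2 * Real.pi)).measurableEmbedding
      (fun p : AddCircle (2 * Real.pi) × AddCircle (2 * Real.pi) =>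
        (ENNReal.ofReal (2 * (‖p.1‖ ^ 2 + ‖p.2‖ ^ 2)))⁻¹)
    rw [show η 2 = Measure.pi fun _ => AddCircle.haarAddCircle from rfl]
    rw [show (fun y : Torus 2 => (ENNReal.ofReal (2 * ∑ i, ‖y i‖ ^ 2))⁻¹)
        = fun y : Torus 2 => (ENNReal.ofReal
            (2 * (‖((MeasurableEquiv.piFinTwo fun _ => AddCircle (2 * Real.pi)) y).1‖ ^ 2
               + ‖((MeasurableEquiv.piFinTwo fun _ => AddCircle (2 * Real.pi)) y).2‖ ^ 2)))⁻¹
      from funext fun y => by simp [Fin.sum_univ_two, MeasurableEquiv.piFinTwo]]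
    rw [this]
    have hmeas : Measurable (fun p : AddCircle (2 * Real.pi) × AddCircle (2 * Real.pi) =>
        (ENNReal.ofReal (2 * (‖p.1‖ ^ 2 + ‖p.2‖ ^ 2)))⁻¹) := by
      refine Measurable.inv (ENNReal.measurable_ofReal.comp ?_)
      exact (continuous_const.mul (((continuous_norm.comp continuous_fst).pow 2).add
        ((continuous_norm.comp continuous_snd).pow 2))).measurable
    rw [lintegral_prod _ hmeas.aemeasurable, circle2_top]

instance (d : ℕ) : (η d).IsAddLeftInvariant := by unfold η; infer_instance

lemma G_Emin_top (d : ℕ) (k : Torus d) (hd : d = 1 ∨ d = 2) :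
    ∫⁻ q, (ENNReal.ofReal (calE d k q - Emin d k))⁻¹ ∂(η d) = ⊤ := by
  obtain ⟨b, hb⟩ := exists_min_quadratic_bound d k
  have htr : ∫⁻ q, (ENNReal.ofReal (calE d k q - Emin d k))⁻¹ ∂(η d)
      = ∫⁻ y, (ENNReal.ofReal (calE d k (b + y) - Emin d k))⁻¹ ∂(η d) :=
    (lintegral_add_left_eq_self
      (fun q => (ENNReal.ofReal (calE d k q - Emin d k))⁻¹) b).symm
  rw [htr, eq_top_iff, ← torus_quad_top d hd]
  refine lintegral_mono fun y => ?_
  exact ENNReal.inv_le_inv.2 (ENNReal.ofReal_le_ofReal (hb y))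

noncomputable def Gfun (d : ℕ) (k : Torus d) (z : ℝ) : ℝ≥0∞ :=
  ∫⁻ q, (ENNReal.ofReal (calE d k q - z))⁻¹ ∂(η d)

lemma Gfun_mono (d : ℕ) (k : Torus d) : Monotone (Gfun d k) := by
  intro z₁ z₂ h
  refine lintegral_mono fun q => ?_
  exact ENNReal.inv_le_inv.2 (ENNReal.ofReal_le_ofReal (by linarith))

lemma Gfun_ne_top (d : ℕ) (k : Torus d) {z : ℝ} (hz : z < Emin d k) :
    Gfun d k z ≠ ⊤ := by
  have hub : Gfun d k z ≤ (ENNReal.ofReal (Emin d k - z))⁻¹ := by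
    calc Gfun d k z ≤ ∫⁻ _q, (ENNReal.ofReal (Emin d k - z))⁻¹ ∂(η d) :=
          lintegral_mono fun q => ENNReal.inv_le_inv.2
            (ENNReal.ofReal_le_ofReal (by linarith [Emin_le d k q]))
      _ = (ENNReal.ofReal (Emin d k - z))⁻¹ := by simp
  refine ne_top_of_le_ne_top ?_ hub
  rw [ne_eq, ENNReal.inv_eq_top]
  simp only [ENNReal.ofReal_eq_zero, not_le]
  linarith

lemma integral_eq_Gfun (d : ℕ) (k : Torus d) {z : ℝ} (hz : z < Emin d k) :
    ∫ q, (calE d k q - z)⁻¹ ∂(η d) = (Gfun d k z).toReal := by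
  have hpos : ∀ q, 0 < calE d k q - z := fun q => sub_pos.2 (hz.trans_le (Emin_le d k q))
  rw [integral_eq_lintegral_of_nonneg_ae
    (Filter.Eventually.of_forall fun q => inv_nonneg.2 (hpos q).le)
    (integrable_inv d k hz).1]
  congr 1
  refine lintegral_congr fun q => ?_
  rw [ENNReal.ofReal_inv_of_pos (hpos q)]

lemma Gfun_toReal_tendsto (d : ℕ) (k : Torus d) (hd : d = 1 ∨ d = 2) :
    Tendsto (fun z => (Gfun d k z).toReal)
      (nhdsWithin (Emin d k) (Set.Iio (Emin d k))) atTop := by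
  rw [tendsto_atTop]
  intro M
  set zseq : ℕ → ℝ := fun n => Emin d k - ((n:ℝ) + 1)⁻¹ with hzseq
  have zseq_def : ∀ n : ℕ, zseq n = Emin d k - ((n:ℝ) + 1)⁻¹ := fun n => rfl
  have hzlt : ∀ n, zseq n < Emin d k := fun n => by
    have : (0:ℝ) < ((n:ℝ)+1)⁻¹ := by positivity
    rw [zseq_def]; linarith
  have hmeas : ∀ n, AEMeasurable
      (fun q : Torus d => (ENNReal.ofReal (calE d k q - zseq n))⁻¹) (η d) := by
    intro n
    refine Measurable.aemeasurable (Measurable.inv (ENNReal.measurable_ofReal.comp ?_))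
    exact ((continuous_calE d k).sub continuous_const).measurable
  have hmono : ∀ q : Torus d,
      Monotone fun n => (ENNReal.ofReal (calE d k q - zseq n))⁻¹ := by
    intro q n m hnm
    refine ENNReal.inv_le_inv.2 (ENNReal.ofReal_le_ofReal ?_)
    have hcast : (n:ℝ) ≤ (m:ℝ) := Nat.cast_le.2 hnm
    have : ((m:ℝ)+1)⁻¹ ≤ ((n:ℝ)+1)⁻¹ := by
      apply inv_anti₀ (by positivity)
      linarith
    rw [zseq_def, zseq_def]; linarith
  have htend : ∀ q : Torus d,
      Tendsto (fun n => (ENNReal.ofReal (calE d k q - zseq n))⁻¹) atTop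
        (nhds (ENNReal.ofReal (calE d k q - Emin d k))⁻¹) := by
    intro q
    refine ENNReal.tendsto_inv_iff.2 (ENNReal.continuous_ofReal.continuousAt.tendsto.comp ?_)
    have h0 : Tendsto (fun n : ℕ => ((n:ℝ)+1)⁻¹) atTop (nhds 0) :=
      tendsto_one_div_add_atTop_nhds_zero_nat.congr fun n => by rw [one_div]
    have : Tendsto (fun n => calE d k q - zseq n) atTop
        (nhds (calE d k q - Emin d k + 0)) := by
      have : (fun n : ℕ => calE d k q - zseq n)
          = fun n : ℕ => calE d k q - Emin d k + ((n:ℝ)+1)⁻¹ := by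
        funext n; rw [zseq_def]; ring
      rw [this]
      exact tendsto_const_nhds.add h0
    simpa using this
  have hGseq : Tendsto (fun n => Gfun d k (zseq n)) atTop (nhds (⊤ : ℝ≥0∞)) := by
    have := lintegral_tendsto_of_tendsto_of_monotone hmeas
      (Filter.Eventually.of_forall hmono) (Filter.Eventually.of_forall htend)
    rw [G_Emin_top d k hd] at this
    exact this
  have hev : ∀ᶠ n in atTop,
      ENNReal.ofReal (max M 0 + 1) < Gfun d k (zseq n) :=
    hGseq.eventually (lt_mem_nhds (by simp [ENNReal.ofReal_lt_top]))
  obtain ⟨n, hn⟩ := hev.exists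
  filter_upwards [Ioo_mem_nhdsLT_of_mem
    (Set.mem_Ioc.2 ⟨hzlt n, le_refl _⟩)] with z hz
  have hzE : z < Emin d k := hz.2
  have h1 : ENNReal.ofReal (max M 0 + 1) < Gfun d k z :=
    hn.trans_le (Gfun_mono d k hz.1.le)
  have h2 : max M 0 + 1 ≤ (Gfun d k z).toReal := by
    have := (ENNReal.toReal_le_toReal ENNReal.ofReal_ne_top
      (Gfun_ne_top d k hzE)).2 h1.le
    rwa [ENNReal.toReal_ofReal (by positivity)] at this
  linarith [le_max_left M 0]

/-- for `μ < 0` the map `z ↦ Δ_μ(k;z)` is strictly decreasing on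
`(−∞, E_min(k))` and tends to `1` as `z → −∞`; moreover if `d ∈ {1,2}` and `k` has a
coordinate different from `π`, then `Δ_μ(k;z) → −∞` as `z ↑ E_min(k)`. -/
theorem determinant_monotone_and_limits (d : ℕ) (μ : ℝ) (hμ : μ < 0) (k : Torus d) :
    StrictAntiOn (fun z => Delta2 d μ k z) (Set.Iio (Emin d k)) ∧
    Tendsto (fun z => Delta2 d μ k z) atBot (nhds 1) ∧
    ((d = 1 ∨ d = 2) → (∃ i, k i ≠ piPt) →
      Tendsto (fun z => Delta2 d μ k z)
        (nhdsWithin (Emin d k) (Set.Iio (Emin d k))) atBot) := by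
  refine ⟨?_, ?_, ?_⟩
  · -- strict antitonicity
    intro z₁ hz₁ z₂ hz₂ hlt
    simp only [Set.mem_Iio] at hz₁ hz₂
    have hI : ∫ q, (calE d k q - z₁)⁻¹ ∂(η d) < ∫ q, (calE d k q - z₂)⁻¹ ∂(η d) := by
      have hposdiff : ∀ q, 0 < (calE d k q - z₂)⁻¹ - (calE d k q - z₁)⁻¹ := by
        intro q
        have h2 : 0 < calE d k q - z₂ := sub_pos.2 (hz₂.trans_le (Emin_le d k q))
        have hlt' : calE d k q - z₂ < calE d k q - z₁ := by linarith
        have := inv_strictAnti₀ h2 hlt'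
        linarith
      have hint : Integrable
          (fun q => (calE d k q - z₂)⁻¹ - (calE d k q - z₁)⁻¹) (η d) :=
        (integrable_inv d k hz₂).sub (integrable_inv d k hz₁)
      have hpos : 0 < ∫ q, ((calE d k q - z₂)⁻¹ - (calE d k q - z₁)⁻¹) ∂(η d) := by
        rw [integral_pos_iff_support_of_nonneg (fun q => (hposdiff q).le) hint]
        have hsup : Function.support
            (fun q => (calE d k q - z₂)⁻¹ - (calE d k q - z₁)⁻¹) = Set.univ := by
          ext q
          simp only [Function.mem_support, Set.mem_univ, iff_true]
          exact (hposdiff q).ne'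
        rw [hsup]
        simp
      rw [integral_sub (integrable_inv d k hz₂) (integrable_inv d k hz₁)] at hpos
      linarith
    simp only [Delta2]
    nlinarith
  · -- limit at -∞
    have hI0 : ∀ z ∈ Set.Iio (0:ℝ), 0 ≤ ∫ q, (calE d k q - z)⁻¹ ∂(η d) := by
      intro z hz
      refine integral_nonneg fun q => inv_nonneg.2 ?_
      have := calE_nonneg d k q
      simp only [Set.mem_Iio] at hz
      linarith
    have hIle : ∀ z ∈ Set.Iio (0:ℝ), ∫ q, (calE d k q - z)⁻¹ ∂(η d) ≤ (-z)⁻¹ := by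
      intro z hz
      simp only [Set.mem_Iio] at hz
      have hzE : z < Emin d k := hz.trans_le (Emin_nonneg d k)
      calc ∫ q, (calE d k q - z)⁻¹ ∂(η d)
          ≤ ∫ _q, (-z)⁻¹ ∂(η d) := by
            refine integral_mono (integrable_inv d k hzE) (integrable_const _) fun q => ?_
            refine inv_anti₀ (by linarith) ?_
            linarith [calE_nonneg d k q]
        _ = (-z)⁻¹ := by simp
    have hIten : Tendsto (fun z => ∫ q, (calE d k q - z)⁻¹ ∂(η d)) atBot (nhds 0) := by
      have hub : Tendsto (fun z : ℝ => (-z)⁻¹) atBot (nhds 0) :=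
        tendsto_inv_atTop_zero.comp tendsto_neg_atBot_atTop
      refine tendsto_of_tendsto_of_tendsto_of_le_of_le' tendsto_const_nhds hub ?_ ?_
      · filter_upwards [Iio_mem_atBot 0] with z hz using hI0 z hz
      · filter_upwards [Iio_mem_atBot 0] with z hz using hIle z hz
    have : Tendsto (fun z => Delta2 d μ k z) atBot (nhds (1 + μ * 0)) := by
      simp only [Delta2]
      exact tendsto_const_nhds.add (tendsto_const_nhds.mul hIten)
    simpa using this
  · -- divergence at Emin
    intro hd _hex
    have hG := Gfun_toReal_tendsto d k hd
    have hmul : Tendsto (fun z => μ * (Gfun d k z).toReal)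
        (nhdsWithin (Emin d k) (Set.Iio (Emin d k))) atBot :=
      Filter.Tendsto.neg_mul_atTop hμ tendsto_const_nhds hG
    have hadd : Tendsto (fun z => 1 + μ * (Gfun d k z).toReal)
        (nhdsWithin (Emin d k) (Set.Iio (Emin d k))) atBot :=
      tendsto_atBot_add_const_left _ 1 hmul
    refine hadd.congr' ?_
    filter_upwards [self_mem_nhdsWithin] with z hz
    simp only [Set.mem_Iio] at hz
    rw [Delta2, integral_eq_Gfun d k hz]
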